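/- Fix δ, δ' ∈ [0,1] with δ ≥ δ', densities f_A, f_B on [0,1], and β ≥ 1, and define wage functions w₁(v) = min(v, δ) and w₂(v) = v·𝟙[v ≥ δ'] . Suppose the equal-profit equation β ∫_δ^1 (v−δ) f_A(v) dv = ∫_0^{δ'} v f_B(v) dv holds. Then for every common wage ε ∈ [0,1], the desegregation profit β ∫_ε^{w₁⁻¹(ε)} (v−ε) f_A(v) dv + ∫_ε^{w₂⁻¹(ε)} (v−ε) f_B(v) dv is at most ∫_0^1 (v−w₂(v)) f_B(v) dv, where w_i⁻¹(ε) = sup{v : w_i(v) ≤ ε}. -/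

import Mathlib

open MeasureTheory Set intervalIntegral

private lemma aux_ii {φ f : ℝ → ℝ} (hφ : Measurable φ) (hφb : ∀ x, |φ x| ≤ 2 * |x| + 1)
    {M : ℝ} (hf : Measurable f) (h0 : ∀ x, 0 ≤ f x) (hM : ∀ x, f x ≤ M)
    (a b : ℝ) : IntervalIntegrable (fun v => φ v * f v) volume a b := by
  rw [intervalIntegrable_iff]
  refine Integrable.mono' (g := fun _ => (2 * (|a| ⊔ |b|) + 1) * M)
    (integrableOn_const ?_) (hφ.mul hf).aestronglyMeasurable ?_
  · rw [Set.uIoc]; exact measure_Ioc_lt_top.ne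
  · filter_upwards [ae_restrict_mem measurableSet_uIoc] with x hx
    have hx1 : x ≤ |a| ⊔ |b| :=
      hx.2.trans (sup_le_sup (le_abs_self a) (le_abs_self b))
    have hx2 : -(|a| ⊔ |b|) ≤ x := by
      refine le_trans (le_inf ?_ ?_) hx.1.le
      · linarith [neg_abs_le a, le_sup_left (a := |a|) (b := |b|)]
      · linarith [neg_abs_le b, le_sup_right (a := |a|) (b := |b|)]
    have hxab : |x| ≤ |a| ⊔ |b| := abs_le.2 ⟨hx2, hx1⟩
    have hM0 : 0 ≤ M := (h0 x).trans (hM x)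
    calc |φ x * f x| = |φ x| * |f x| := abs_mul _ _
      _ ≤ (2 * |x| + 1) * M := by
          refine mul_le_mul (hφb x) ?_ (abs_nonneg _) (by positivity)
          rw [abs_of_nonneg (h0 x)]; exact hM x
      _ ≤ (2 * (|a| ⊔ |b|) + 1) * M := by nlinarith

/-- The parameterized wage profiles `w₁(v) = min(v,δ)`, `w₂(v) = v·𝟙[v ≥ δ']` with `δ ≥ δ'`
and equal profits satisfy the No Desegregation Condition: for every common wage `ε ∈ [0,1]`,
the desegregation profit is at most firm 2's profit. -/
theorem stmt11 (β δ δ' MA MB : ℝ) (hβ : 1 ≤ β)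
    (hδ : δ ∈ Set.Icc (0:ℝ) 1) (hδ' : δ' ∈ Set.Icc (0:ℝ) 1) (hδδ : δ' ≤ δ)
    (fA fB : ℝ → ℝ) (hmA : Measurable fA) (hmB : Measurable fB)
    (hA0 : ∀ v, 0 ≤ fA v) (hB0 : ∀ v, 0 ≤ fB v)
    (hAu : ∀ v, fA v ≤ MA) (hBu : ∀ v, fB v ≤ MB)
    (w₁ w₂ w₁inv w₂inv : ℝ → ℝ)
    (hw1 : ∀ v, w₁ v = min v δ)
    (hw2 : ∀ v, w₂ v = if δ' ≤ v then v else 0)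
    (hinv1 : ∀ ε, w₁inv ε = sSup {v : ℝ | v ∈ Set.Icc (0:ℝ) 1 ∧ w₁ v ≤ ε})
    (hinv2 : ∀ ε, w₂inv ε = sSup {v : ℝ | v ∈ Set.Icc (0:ℝ) 1 ∧ w₂ v ≤ ε})
    (heqprofit : β * ∫ v in δ..1, (v - δ) * fA v = ∫ v in (0:ℝ)..δ', v * fB v) :
    ∀ ε ∈ Set.Icc (0:ℝ) 1,
      β * (∫ v in ε..(w₁inv ε), (v - ε) * fA v)
          + (∫ v in ε..(w₂inv ε), (v - ε) * fB v)
        ≤ ∫ v in (0:ℝ)..1, (v - w₂ v) * fB v := by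
  intro ε hε
  obtain ⟨hε0, hε1⟩ := hε
  obtain ⟨hδ0, hδ1⟩ := hδ
  obtain ⟨hδ'0, hδ'1⟩ := hδ'
  have hβ0 : (0:ℝ) ≤ β := zero_le_one.trans hβ
  -- measurability of w₂
  have hw2m : Measurable w₂ := by
    have h : w₂ = fun v => if δ' ≤ v then v else 0 := funext hw2
    rw [h]
    exact Measurable.ite measurableSet_Ici measurable_id measurable_const
  -- integrability helpers
  have iiA : ∀ (c a b : ℝ), |c| ≤ 1 →
      IntervalIntegrable (fun v => (v - c) * fA v) volume a b := by
    intro c a b hc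
    refine aux_ii (measurable_id.sub measurable_const) (fun x => ?_) hmA hA0 hAu a b
    have h := abs_sub x c
    simp only [Pi.sub_apply, id_eq]
    nlinarith [abs_nonneg x, abs_nonneg c]
  have iiB : ∀ (c a b : ℝ), |c| ≤ 1 →
      IntervalIntegrable (fun v => (v - c) * fB v) volume a b := by
    intro c a b hc
    refine aux_ii (measurable_id.sub measurable_const) (fun x => ?_) hmB hB0 hBu a b
    have h := abs_sub x c
    simp only [Pi.sub_apply, id_eq]
    nlinarith [abs_nonneg x, abs_nonneg c]
  have iiB0 : ∀ (a b : ℝ), IntervalIntegrable (fun v => v * fB v) volume a b := by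
    intro a b
    refine aux_ii measurable_id (fun x => by simp; linarith [abs_nonneg x]) hmB hB0 hBu a b
  have iiW : ∀ (a b : ℝ), IntervalIntegrable (fun v => (v - w₂ v) * fB v) volume a b := by
    intro a b
    refine aux_ii (measurable_id.sub hw2m) (fun x => ?_) hmB hB0 hBu a b
    rw [Pi.sub_apply, id_eq, hw2 x]
    split_ifs with h
    · simp; linarith [abs_nonneg x]
    · simp; linarith [abs_nonneg x]
  have hεabs : |ε| ≤ 1 := abs_le.2 ⟨by linarith, hε1⟩
  have hδabs : |δ| ≤ 1 := abs_le.2 ⟨by linarith, hδ1⟩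
  -- RHS equals ∫₀^δ' v fB
  have hRHS : (∫ v in (0:ℝ)..1, (v - w₂ v) * fB v) = ∫ v in (0:ℝ)..δ', v * fB v := by
    rw [← integral_add_adjacent_intervals (b := δ') (iiW 0 δ') (iiW δ' 1)]
    have h2 : (∫ v in δ'..1, (v - w₂ v) * fB v) = 0 := by
      have hEq : EqOn (fun v => (v - w₂ v) * fB v) (fun _ => (0:ℝ)) (uIcc δ' 1) := by
        intro x hx
        rw [uIcc_of_le hδ'1] at hx
        simp [hw2 x, hx.1]
      rw [integral_congr hEq]
      simp
    have h1 : (∫ v in (0:ℝ)..δ', (v - w₂ v) * fB v) = ∫ v in (0:ℝ)..δ', v * fB v := by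
      apply intervalIntegral.integral_congr_ae
      have hne : ∀ᵐ (x : ℝ), x ≠ δ' := by
        rw [ae_iff]
        have : {x : ℝ | ¬ x ≠ δ'} = {δ'} := by ext x; simp
        rw [this]
        exact measure_singleton δ'
      filter_upwards [hne] with x hx _
      have : ¬ δ' ≤ x := by
        rw [uIoc_of_le hδ'0] at *
        rcases lt_or_ge x δ' with h | h
        · exact not_le.2 h
        · exact absurd (le_antisymm ‹x ∈ Ioc 0 δ'›.2 h) hx
      simp [hw2 x, this]
    rw [h1, h2, add_zero]
  rcases lt_or_ge ε δ with hcase | hcase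
  · -- ε < δ : w₁inv ε = ε
    have hw1inv : w₁inv ε = ε := by
      rw [hinv1]
      have hset : {v : ℝ | v ∈ Icc (0:ℝ) 1 ∧ w₁ v ≤ ε} = Icc 0 ε := by
        ext v
        simp only [mem_setOf_eq, mem_Icc, hw1]
        constructor
        · rintro ⟨⟨h0, h1⟩, hmin⟩
          refine ⟨h0, ?_⟩
          rcases le_total v δ with h | h
          · rwa [min_eq_left h] at hmin
          · rw [min_eq_right h] at hmin; linarith
        · rintro ⟨h0, h1⟩
          exact ⟨⟨h0, h1.trans hε1⟩, (min_le_left v δ).trans h1⟩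
      rw [hset]
      exact csSup_Icc hε0
    rw [hw1inv, integral_same, mul_zero, zero_add, hRHS]
    rcases lt_or_ge ε δ' with hc2 | hc2
    · -- ε < δ' : w₂inv ε = δ'
      have hw2inv : w₂inv ε = δ' := by
        rw [hinv2]
        have hset : {v : ℝ | v ∈ Icc (0:ℝ) 1 ∧ w₂ v ≤ ε} = Ico 0 δ' := by
          ext v
          simp only [mem_setOf_eq, mem_Icc, mem_Ico, hw2]
          constructor
          · rintro ⟨⟨h0, h1⟩, hw⟩
            by_cases h : δ' ≤ v
            · rw [if_pos h] at hw; linarith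
            · exact ⟨h0, not_le.1 h⟩
          · rintro ⟨h0, h1⟩
            refine ⟨⟨h0, by linarith⟩, ?_⟩
            rw [if_neg (not_le.2 h1)]; exact hε0
        rw [hset]
        exact csSup_Ico (by linarith)
      rw [hw2inv]
      calc (∫ v in ε..δ', (v - ε) * fB v) ≤ ∫ v in ε..δ', v * fB v := by
            refine integral_mono_on hc2.le (iiB ε ε δ' hεabs) (iiB0 ε δ') fun x hx => ?_
            exact mul_le_mul_of_nonneg_right (by linarith) (hB0 x)
        _ ≤ ∫ v in (0:ℝ)..δ', v * fB v := by
            rw [← integral_add_adjacent_intervals (b := ε) (iiB0 0 ε) (iiB0 ε δ')]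
            have h0 : 0 ≤ ∫ v in (0:ℝ)..ε, v * fB v :=
              integral_nonneg hε0 fun x hx => mul_nonneg hx.1 (hB0 x)
            linarith
    · -- δ' ≤ ε : w₂inv ε = ε
      have hw2inv : w₂inv ε = ε := by
        rw [hinv2]
        have hset : {v : ℝ | v ∈ Icc (0:ℝ) 1 ∧ w₂ v ≤ ε} = Icc 0 ε := by
          ext v
          simp only [mem_setOf_eq, mem_Icc, hw2]
          constructor
          · rintro ⟨⟨h0, h1⟩, hw⟩
            by_cases h : δ' ≤ v
            · rw [if_pos h] at hw; exact ⟨h0, hw⟩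
            · exact ⟨h0, (not_le.1 h).le.trans hc2⟩
          · rintro ⟨h0, h1⟩
            refine ⟨⟨h0, h1.trans hε1⟩, ?_⟩
            split_ifs
            · exact h1
            · exact hε0
        rw [hset]
        exact csSup_Icc hε0
      rw [hw2inv, integral_same]
      exact integral_nonneg hδ'0 fun x hx => mul_nonneg hx.1 (hB0 x)
  · -- δ ≤ ε : w₁inv ε = 1, w₂inv ε = ε
    have hw1inv : w₁inv ε = 1 := by
      rw [hinv1]
      have hset : {v : ℝ | v ∈ Icc (0:ℝ) 1 ∧ w₁ v ≤ ε} = Icc 0 1 := by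
        ext v
        simp only [mem_setOf_eq, mem_Icc, hw1]
        constructor
        · rintro ⟨⟨h0, h1⟩, _⟩; exact ⟨h0, h1⟩
        · rintro ⟨h0, h1⟩
          exact ⟨⟨h0, h1⟩, (min_le_right v δ).trans hcase⟩
      rw [hset]
      exact csSup_Icc zero_le_one
    have hw2inv : w₂inv ε = ε := by
      rw [hinv2]
      have hset : {v : ℝ | v ∈ Icc (0:ℝ) 1 ∧ w₂ v ≤ ε} = Icc 0 ε := by
        ext v
        simp only [mem_setOf_eq, mem_Icc, hw2]
        constructor
        · rintro ⟨⟨h0, h1⟩, hw⟩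
          by_cases h : δ' ≤ v
          · rw [if_pos h] at hw; exact ⟨h0, hw⟩
          · exact ⟨h0, (not_le.1 h).le.trans (hδδ.trans hcase)⟩
        · rintro ⟨h0, h1⟩
          refine ⟨⟨h0, h1.trans hε1⟩, ?_⟩
          split_ifs
          · exact h1
          · exact hε0
      rw [hset]
      exact csSup_Icc hε0
    rw [hw1inv, hw2inv, integral_same, add_zero, hRHS, ← heqprofit]
    refine mul_le_mul_of_nonneg_left ?_ hβ0
    calc (∫ v in ε..1, (v - ε) * fA v) ≤ ∫ v in ε..1, (v - δ) * fA v := by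
          refine integral_mono_on hε1 (iiA ε ε 1 hεabs) (iiA δ ε 1 hδabs) fun x hx => ?_
          exact mul_le_mul_of_nonneg_right (by linarith) (hA0 x)
      _ ≤ ∫ v in δ..1, (v - δ) * fA v := by
          rw [← integral_add_adjacent_intervals (b := ε) (iiA δ δ ε hδabs) (iiA δ ε 1 hδabs)]
          have h0 : 0 ≤ ∫ v in δ..ε, (v - δ) * fA v :=
            integral_nonneg hcase fun x hx => mul_nonneg (by linarith [hx.1]) (hA0 x)
          linarith
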